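/- For every a > 0, the function κ ↦ κ/tanh(κa/2) − 2/a, extended by the value 0 at κ = 0, is continuous and strictly increasing on [0,∞), tends to +∞ as κ → ∞, and hence for every l > 0 the equation l = κ/tanh(κa/2) − 2/a has a unique solution κ = η(l,a) > 0. -/

import Mathlib

open Real Set Filter Topology

/-- The function κ ↦ κ/tanh(κa/2) − 2/a extended by 0 at κ = 0. -/
noncomputable def etaFun (a κ : ℝ) : ℝ :=
  if κ = 0 then 0 else κ / Real.tanh (κ * a / 2) - 2 / a

/-- Auxiliary: x ↦ x cosh x / sinh x, extended by 1 at 0. -/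
noncomputable def gFun (x : ℝ) : ℝ :=
  if x = 0 then 1 else x * Real.cosh x / Real.sinh x

lemma gFun_zero : gFun 0 = 1 := by simp [gFun]

lemma gFun_of_ne {x : ℝ} (hx : x ≠ 0) : gFun x = x * Real.cosh x / Real.sinh x := by
  simp [gFun, hx]

lemma gFun_continuousAt_zero : ContinuousAt gFun 0 := by
  have h1 : Tendsto (fun y => Real.sinh y / y) (𝓝[≠] (0:ℝ)) (𝓝 1) := by
    have := hasDerivAt_iff_tendsto_slope.mp (Real.hasDerivAt_sinh 0)
    simpa [slope_fun_def, Real.sinh_zero, Real.cosh_zero, sub_zero, div_eq_inv_mul] using this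
  have h2 : Tendsto (fun y => Real.cosh y * (Real.sinh y / y)⁻¹) (𝓝[≠] (0:ℝ)) (𝓝 1) := by
    have hc : Tendsto Real.cosh (𝓝[≠] (0:ℝ)) (𝓝 1) := by
      simpa using (Real.continuous_cosh.tendsto 0).mono_left nhdsWithin_le_nhds
    simpa using hc.mul (h1.inv₀ one_ne_zero)
  have h3 : Tendsto gFun (𝓝[≠] (0:ℝ)) (𝓝 1) := by
    apply h2.congr'
    filter_upwards [self_mem_nhdsWithin] with y hy
    have hy' : y ≠ 0 := hy
    have hs : Real.sinh y ≠ 0 := Real.sinh_ne_zero.mpr hy'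
    rw [gFun_of_ne hy']
    field_simp
  rw [ContinuousAt, gFun_zero, ← nhdsNE_sup_pure]
  exact h3.sup (by simpa [gFun_zero] using tendsto_pure_nhds gFun 0)

lemma gFun_continuousOn : ContinuousOn gFun (Set.Ici 0) := by
  intro x hx
  rcases eq_or_lt_of_le (Set.mem_Ici.mp hx) with h0 | h0
  · exact (h0 ▸ gFun_continuousAt_zero).continuousWithinAt
  · have hs : Real.sinh x ≠ 0 := Real.sinh_ne_zero.mpr (ne_of_gt h0)
    have hc : ContinuousAt (fun y => y * Real.cosh y / Real.sinh y) x :=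
      ((continuousAt_id.mul Real.continuous_cosh.continuousAt).div
        Real.continuous_sinh.continuousAt hs)
    have heq : (fun y => y * Real.cosh y / Real.sinh y) =ᶠ[𝓝 x] gFun := by
      filter_upwards [Ioi_mem_nhds h0] with y hy
      exact (gFun_of_ne (ne_of_gt hy)).symm
    exact (hc.congr heq).continuousWithinAt

lemma gFun_hasDerivAt {x : ℝ} (hx : 0 < x) :
    HasDerivAt (fun y => y * Real.cosh y / Real.sinh y)
      ((Real.cosh x * Real.sinh x - x) / Real.sinh x ^ 2) x := by
  have hs : Real.sinh x ≠ 0 := Real.sinh_ne_zero.mpr (ne_of_gt hx)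
  have h1 : HasDerivAt (fun y => y * Real.cosh y)
      (1 * Real.cosh x + x * Real.sinh x) x :=
    (hasDerivAt_id x).mul (Real.hasDerivAt_cosh x)
  have h2 := h1.div (Real.hasDerivAt_sinh x) hs
  refine h2.congr_deriv ?_
  have hid := Real.cosh_sq_sub_sinh_sq x
  rw [div_left_inj' (pow_ne_zero 2 hs)]
  linear_combination (-x) * hid

lemma gFun_deriv_pos {x : ℝ} (hx : 0 < x) : 0 < deriv gFun x := by
  have hs : 0 < Real.sinh x := Real.sinh_pos_iff.mpr hx
  have heq : gFun =ᶠ[𝓝 x] (fun y => y * Real.cosh y / Real.sinh y) := by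
    filter_upwards [Ioi_mem_nhds hx] with y hy
    exact gFun_of_ne (ne_of_gt hy)
  rw [heq.deriv_eq, (gFun_hasDerivAt hx).deriv]
  have hnum : 0 < Real.cosh x * Real.sinh x - x := by
    have h2 : 2 * x < Real.sinh (2 * x) := Real.self_lt_sinh_iff.mpr (by linarith)
    rw [Real.sinh_two_mul] at h2
    nlinarith
  positivity

lemma gFun_strictMonoOn : StrictMonoOn gFun (Set.Ici 0) :=
  strictMonoOn_of_deriv_pos (convex_Ici 0) gFun_continuousOn
    (fun x hx => gFun_deriv_pos (by simpa using hx))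

lemma gFun_tendsto_atTop : Tendsto gFun atTop atTop := by
  apply tendsto_atTop_mono' atTop _ tendsto_id
  filter_upwards [eventually_gt_atTop (0:ℝ)] with x hx
  have hs : 0 < Real.sinh x := Real.sinh_pos_iff.mpr hx
  have hsc : Real.sinh x < Real.cosh x := Real.sinh_lt_cosh x
  rw [gFun_of_ne (ne_of_gt hx), id_eq, le_div_iff₀ hs]
  nlinarith

lemma etaFun_eq (a : ℝ) (ha : 0 < a) (κ : ℝ) :
    etaFun a κ = 2 / a * (gFun (κ * a / 2) - 1) := by
  unfold etaFun
  by_cases hκ : κ = 0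
  · simp [hκ, gFun_zero]
  · have hu : κ * a / 2 ≠ 0 := by
      simp only [div_ne_zero_iff, mul_ne_zero_iff]
      exact ⟨⟨hκ, ne_of_gt ha⟩, two_ne_zero⟩
    have hs : Real.sinh (κ * a / 2) ≠ 0 := Real.sinh_ne_zero.mpr hu
    have hc : Real.cosh (κ * a / 2) ≠ 0 := ne_of_gt (Real.cosh_pos _)
    rw [if_neg hκ, gFun_of_ne hu, Real.tanh_eq_sinh_div_cosh]
    field_simp

theorem stmt6 (a : ℝ) (ha : 0 < a) :
    ContinuousOn (etaFun a) (Set.Ici 0) ∧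
    StrictMonoOn (etaFun a) (Set.Ici 0) ∧
    Filter.Tendsto (etaFun a) Filter.atTop Filter.atTop ∧
    ∀ l : ℝ, 0 < l → ∃! κ : ℝ, 0 < κ ∧ l = κ / Real.tanh (κ * a / 2) - 2 / a := by
  have ha2 : (0:ℝ) < 2 / a := by positivity
  have hmap : Set.MapsTo (fun κ : ℝ => κ * a / 2) (Set.Ici 0) (Set.Ici 0) := by
    intro x hx
    have : (0:ℝ) ≤ x := hx
    simp only [Set.mem_Ici]
    positivity
  have hcont : ContinuousOn (etaFun a) (Set.Ici 0) := by
    have h1 : ContinuousOn (fun κ : ℝ => 2 / a * (gFun (κ * a / 2) - 1)) (Set.Ici 0) := by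
      apply ContinuousOn.mul continuousOn_const
      exact (gFun_continuousOn.comp (Continuous.continuousOn (by continuity)) hmap).sub
        continuousOn_const
    exact h1.congr fun κ _ => etaFun_eq a ha κ
  have hmono : StrictMonoOn (etaFun a) (Set.Ici 0) := by
    intro x hx y hy hxy
    rw [etaFun_eq a ha, etaFun_eq a ha]
    have hx' : (0:ℝ) ≤ x := hx
    have h1 : x * a / 2 < y * a / 2 := by nlinarith
    have h2 := gFun_strictMonoOn (hmap hx) (hmap hy) h1
    nlinarith
  have htend : Tendsto (etaFun a) atTop atTop := by
    have h1 : Tendsto (fun κ : ℝ => κ * a / 2) atTop atTop := by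
      apply Tendsto.atTop_div_const two_pos
      exact Tendsto.atTop_mul_const ha tendsto_id
    have h2 : Tendsto (fun x : ℝ => 2 / a * (x - 1)) atTop atTop := by
      apply Tendsto.const_mul_atTop ha2
      exact tendsto_atTop_add_const_right atTop (-1) tendsto_id
    have h3 := h2.comp (gFun_tendsto_atTop.comp h1)
    apply h3.congr
    intro κ
    exact (etaFun_eq a ha κ).symm
  refine ⟨hcont, hmono, htend, ?_⟩
  intro l hl
  have heta0 : etaFun a 0 = 0 := by simp [etaFun]
  -- find b with etaFun a b large
  obtain ⟨b, hb0, hbl⟩ : ∃ b : ℝ, 0 ≤ b ∧ l ≤ etaFun a b := by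
    have := (htend.eventually (eventually_ge_atTop l)).and (eventually_ge_atTop (0:ℝ))
    obtain ⟨b, hb1, hb2⟩ := this.exists
    exact ⟨b, hb2, hb1⟩
  have hsub : Set.Icc (0:ℝ) b ⊆ Set.Ici 0 := Set.Icc_subset_Ici_self
  have hivt := intermediate_value_Icc hb0 (hcont.mono hsub)
  have hmem : l ∈ Set.Icc (etaFun a 0) (etaFun a b) := by
    rw [heta0]; exact ⟨hl.le, hbl⟩
  obtain ⟨κ, hκmem, hκeq⟩ := hivt hmem
  have hκpos : 0 < κ := by
    rcases eq_or_lt_of_le hκmem.1 with h | h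
    · exfalso; rw [← h, heta0] at hκeq; linarith
    · exact h
  have hform : ∀ x : ℝ, 0 < x → (etaFun a x = x / Real.tanh (x * a / 2) - 2 / a) := by
    intro x hx; simp [etaFun, ne_of_gt hx]
  refine ⟨κ, ⟨hκpos, by rw [← hform κ hκpos, hκeq]⟩, ?_⟩
  rintro κ' ⟨hκ'pos, hκ'eq⟩
  have h1 : etaFun a κ' = l := by rw [hform κ' hκ'pos, ← hκ'eq]
  have h2 : etaFun a κ' = etaFun a κ := by rw [h1, hκeq]
  exact hmono.injOn hκ'pos.le hκpos.le h2
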